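/- Let p_0, p_1, …, p_n : ℝ^d → ℝ be affine-linear functions defining n+1 pairwise distinct hyperplanes H_i = {x : p_i(x) = 0}, and assume the arrangement is essential, i.e. the linear parts of p_0,…,p_n span the dual space (ℝ^d)^*. Let s_0,…,s_n be positive real numbers. Then every point x ∈ ℂ^d with p_i(x) ≠ 0 for all i (extending each p_i ℂ-linearly to ℂ^d) that satisfies the likelihood equations Σ_{i=0}^n s_i·(∂p_i/∂x_k)/p_i(x) = 0 for k = 1,…,d lies in ℝ^d, and each bounded connected component of ℝ^d ∖ (H_0 ∪ ⋯ ∪ H_n) contains exactly one such point. -/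

import Mathlib

open Set Finset
open Set Finset

-- Lemma C: essentiality ⇒ vector orthogonal to all a i is zero
lemma aux_orth {d n : ℕ} {a : Fin (n + 1) → Fin d → ℝ}
    (hess : Submodule.span ℝ (Set.range a) = ⊤) (v : Fin d → ℝ)
    (h : ∀ i, ∑ k, a i k * v k = 0) : v = 0 := by
  let ℓ : (Fin d → ℝ) →ₗ[ℝ] ℝ :=
    { toFun := fun w => ∑ k, w k * v k
      map_add' := by intro w w'; simp [add_mul, Finset.sum_add_distrib]
      map_smul' := by intro c w; simp [Finset.mul_sum, mul_assoc] }
  have hker : Submodule.span ℝ (Set.range a) ≤ LinearMap.ker ℓ := by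
    rw [Submodule.span_le]
    rintro _ ⟨i, rfl⟩
    simpa [ℓ] using h i
  have hv : ℓ v = 0 := by
    have : v ∈ LinearMap.ker ℓ := hker (hess ▸ Submodule.mem_top)
    exact this
  have hsq : ∑ k, v k * v k = 0 := hv
  funext k
  have := Finset.sum_eq_zero_iff_of_nonneg (fun k _ => mul_self_nonneg (v k)) |>.mp hsq k (Finset.mem_univ k)
  have := mul_self_eq_zero.mp this
  simpa using this

-- Lemma A: sign constancy on connected component
lemma aux_sign {E : Type*} [TopologicalSpace E] {f : E → ℝ} {U : Set E}
    (hU : ∀ u ∈ U, f u ≠ 0) (hf : Continuous f) {x y : E}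
    (hx : x ∈ U) (hy : y ∈ connectedComponentIn U x) : 0 < f x * f y := by
  have hC : IsPreconnected (connectedComponentIn U x) := isPreconnected_connectedComponentIn
  have hCU : connectedComponentIn U x ⊆ U := connectedComponentIn_subset U x
  have hxC : x ∈ connectedComponentIn U x := mem_connectedComponentIn hx
  have hfx : f x ≠ 0 := hU x hx
  have hfy : f y ≠ 0 := hU y (hCU hy)
  rcases lt_or_gt_of_ne hfx with h1 | h1 <;> rcases lt_or_gt_of_ne hfy with h2 | h2
  · exact mul_pos_of_neg_of_neg h1 h2
  · exfalso
    obtain ⟨z, hz, hz0⟩ := hC.intermediate_value hxC hy hf.continuousOn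
      (Set.mem_Icc.mpr ⟨h1.le, h2.le⟩)
    exact hU z (hCU hz) hz0
  · exfalso
    obtain ⟨z, hz, hz0⟩ := hC.intermediate_value hy hxC hf.continuousOn
      (Set.mem_Icc.mpr ⟨h2.le, h1.le⟩)
    exact hU z (hCU hz) hz0
  · exact mul_pos h1 h2

-- Lemma B: point of closure of component lying in U is in the component
lemma aux_closure_mem {E : Type*} [TopologicalSpace E] [LocallyConnectedSpace E]
    {U : Set E} (hUo : IsOpen U) {x w : E} (hx : x ∈ U)
    (hw : w ∈ closure (connectedComponentIn U x)) (hwU : w ∈ U) :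
    w ∈ connectedComponentIn U x := by
  have hD : IsOpen (connectedComponentIn U w) := hUo.connectedComponentIn
  have hwD : w ∈ connectedComponentIn U w := mem_connectedComponentIn hwU
  obtain ⟨z, hz1, hz2⟩ := (mem_closure_iff.mp hw) _ hD hwD
  have e1 : connectedComponentIn U w = connectedComponentIn U z := connectedComponentIn_eq hz1
  have e2 : connectedComponentIn U x = connectedComponentIn U z := connectedComponentIn_eq hz2
  rw [e2, ← e1]
  exact hwD

lemma part1 {d n : ℕ} (a : Fin (n + 1) → Fin d → ℝ) (b : Fin (n + 1) → ℝ)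
    (hess : Submodule.span ℝ (Set.range a) = ⊤)
    (s : Fin (n + 1) → ℝ) (hs : ∀ i, 0 < s i) :
    ∀ z : Fin d → ℂ,
      (∀ i, (∑ k, (a i k : ℂ) * z k + (b i : ℂ)) ≠ 0) →
      (∀ k, ∑ i, (s i : ℂ) * (a i k : ℂ) / (∑ k', (a i k' : ℂ) * z k' + (b i : ℂ)) = 0) →
      ∀ k, (z k).im = 0 := by
  intro z hz heq k
  set P : Fin (n + 1) → ℂ := fun i => ∑ k', (a i k' : ℂ) * z k' + (b i : ℂ) with hP
  set v : Fin d → ℝ := fun k => (z k).im with hv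
  set c : Fin (n + 1) → ℝ := fun i => ∑ k', a i k' * v k' with hc
  -- main sum is zero
  have key : ∑ i, (s i : ℂ) * (c i : ℂ) / P i = 0 := by
    have h0 : ∑ k', (v k' : ℂ) * ∑ i, (s i : ℂ) * (a i k' : ℂ) / P i = 0 := by
      apply Finset.sum_eq_zero
      intro k' _
      rw [heq k', mul_zero]
    calc ∑ i, (s i : ℂ) * (c i : ℂ) / P i
        = ∑ i, ∑ k', (v k' : ℂ) * ((s i : ℂ) * (a i k' : ℂ) / P i) := by
          apply Finset.sum_congr rfl
          intro i _
          rw [hc]; push_cast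
          rw [Finset.mul_sum, Finset.sum_div]
          apply Finset.sum_congr rfl
          intro k' _
          ring
      _ = ∑ k', ∑ i, (v k' : ℂ) * ((s i : ℂ) * (a i k' : ℂ) / P i) := Finset.sum_comm
      _ = ∑ k', (v k' : ℂ) * ∑ i, (s i : ℂ) * (a i k' : ℂ) / P i := by
          simp [Finset.mul_sum]
      _ = 0 := h0
  -- imaginary parts of P
  have hPim : ∀ i, (P i).im = c i := by
    intro i
    simp [hP, hc, hv, Complex.add_im, Complex.im_sum]
  -- take imaginary part
  have him : ∑ i, s i * (c i)^2 / Complex.normSq (P i) = 0 := by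
    have := congrArg Complex.im key
    rw [Complex.im_sum] at this
    simp only [Complex.zero_im] at this
    have heach : ∀ i, ((s i : ℂ) * (c i : ℂ) / P i).im
        = -(s i * (c i)^2 / Complex.normSq (P i)) := by
      intro i
      rw [div_eq_mul_inv, ← Complex.ofReal_mul]
      simp only [Complex.mul_im, Complex.ofReal_re, Complex.ofReal_im, Complex.inv_im,
        Complex.inv_re, hPim i, zero_mul, add_zero]
      field_simp
    rw [Finset.sum_congr rfl (fun i _ => heach i), Finset.sum_neg_distrib] at this
    linarith [neg_eq_zero.mp this]
  -- each term vanishes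
  have hci : ∀ i, c i = 0 := by
    intro i
    have hnn : ∀ j ∈ Finset.univ, 0 ≤ s j * (c j)^2 / Complex.normSq (P j) := by
      intro j _
      exact div_nonneg (mul_nonneg (hs j).le (sq_nonneg _)) (Complex.normSq_nonneg _)
    have := (Finset.sum_eq_zero_iff_of_nonneg hnn).mp him i (Finset.mem_univ i)
    have hns := Complex.normSq_pos.mpr (hz i)
    have hsi := hs i
    have : (c i)^2 = 0 := by
      by_contra hne
      have : 0 < (c i)^2 := lt_of_le_of_ne (sq_nonneg _) (Ne.symm hne)
      nlinarith [div_pos (mul_pos hsi this) hns]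
    exact pow_eq_zero_iff (by norm_num) |>.mp this
  have := aux_orth hess v hci
  have : v k = 0 := congrFun this k
  simpa [hv] using this

-- uniqueness: two critical points with all same-sign denominators coincide
lemma aux_uniq {d n : ℕ} {a : Fin (n + 1) → Fin d → ℝ} {b : Fin (n + 1) → ℝ}
    (hess : Submodule.span ℝ (Set.range a) = ⊤)
    {s : Fin (n + 1) → ℝ} (hs : ∀ i, 0 < s i)
    (y₁ y₂ : Fin d → ℝ)
    (hsign : ∀ i, 0 < (∑ k, a i k * y₁ k + b i) * (∑ k, a i k * y₂ k + b i))
    (e₁ : ∀ k, ∑ i, s i * a i k / (∑ k', a i k' * y₁ k' + b i) = 0)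
    (e₂ : ∀ k, ∑ i, s i * a i k / (∑ k', a i k' * y₂ k' + b i) = 0) :
    y₁ = y₂ := by
  set p : Fin (n + 1) → (Fin d → ℝ) → ℝ := fun i y => ∑ k, a i k * y k + b i with hp
  set v : Fin d → ℝ := fun k => y₂ k - y₁ k with hv
  set c : Fin (n + 1) → ℝ := fun i => ∑ k, a i k * v k with hc
  have hne : ∀ i (y : Fin d → ℝ), 0 < p i y₁ * p i y₂ → True := fun _ _ _ => trivial
  have hc_eq : ∀ i, c i = p i y₂ - p i y₁ := by
    intro i
    simp only [hc, hv, hp, mul_sub, Finset.sum_sub_distrib]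
    ring
  have h1 : ∀ (y : Fin d → ℝ), (∀ k, ∑ i, s i * a i k / p i y = 0) →
      ∑ i, s i * c i / p i y = 0 := by
    intro y hy
    calc ∑ i, s i * c i / p i y
        = ∑ i, ∑ k, v k * (s i * a i k / p i y) := by
          apply Finset.sum_congr rfl
          intro i _
          rw [hc, Finset.mul_sum, Finset.sum_div]
          apply Finset.sum_congr rfl
          intro k _
          ring
      _ = ∑ k, ∑ i, v k * (s i * a i k / p i y) := Finset.sum_comm
      _ = ∑ k, v k * ∑ i, s i * a i k / p i y := by simp [Finset.mul_sum]
      _ = 0 := by simp only [hy, mul_zero, Finset.sum_const_zero]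
  have hS : ∑ i, s i * (c i)^2 / (p i y₁ * p i y₂) = 0 := by
    have := h1 y₁ e₁
    have h2 := h1 y₂ e₂
    have : ∑ i, (s i * c i / p i y₁ - s i * c i / p i y₂) = 0 := by
      rw [Finset.sum_sub_distrib, h1 y₁ e₁, h1 y₂ e₂, sub_zero]
    rw [← this]
    apply Finset.sum_congr rfl
    intro i _
    have hprod := hsign i
    have hne1 : p i y₁ ≠ 0 := by
      intro h; simp only [p] at h; rw [h] at hprod; simp at hprod
    have hne2 : p i y₂ ≠ 0 := by
      intro h; simp only [p] at h; rw [h] at hprod; simp at hprod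
    rw [hc_eq i]
    field_simp
  have hci : ∀ i, c i = 0 := by
    intro i
    have hnn : ∀ j ∈ Finset.univ, 0 ≤ s j * (c j)^2 / (p j y₁ * p j y₂) :=
      fun j _ => div_nonneg (mul_nonneg (hs j).le (sq_nonneg _)) (hsign j).le
    have h0 := (Finset.sum_eq_zero_iff_of_nonneg hnn).mp hS i (Finset.mem_univ i)
    have hprod := hsign i
    have hsi := hs i
    have : (c i)^2 = 0 := by
      by_contra hne
      have hlt : 0 < (c i)^2 := lt_of_le_of_ne (sq_nonneg _) (Ne.symm hne)
      nlinarith [div_pos (mul_pos hsi hlt) hprod]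
    exact pow_eq_zero_iff (by norm_num) |>.mp this
  have hv0 := aux_orth hess v hci
  funext k
  have := congrFun hv0 k
  simp only [hv, Pi.zero_apply] at this
  linarith

lemma aux_exists {d n : ℕ} (a : Fin (n + 1) → Fin d → ℝ) (b : Fin (n + 1) → ℝ)
    (s : Fin (n + 1) → ℝ) (hs : ∀ i, 0 < s i)
    (x : Fin d → ℝ)
    (hx : x ∈ (⋃ i, {y : Fin d → ℝ | ∑ k, a i k * y k + b i = 0})ᶜ)
    (hbdd : Bornology.IsBounded
      (connectedComponentIn (⋃ i, {y : Fin d → ℝ | ∑ k, a i k * y k + b i = 0})ᶜ x)) :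
    ∃ y : Fin d → ℝ,
      y ∈ connectedComponentIn (⋃ i, {y : Fin d → ℝ | ∑ k, a i k * y k + b i = 0})ᶜ x ∧
      ∀ k, ∑ i, s i * a i k / (∑ k', a i k' * y k' + b i) = 0 := by
  set p : Fin (n + 1) → (Fin d → ℝ) → ℝ := fun i y => ∑ k, a i k * y k + b i with hp
  set U : Set (Fin d → ℝ) := (⋃ i, {y : Fin d → ℝ | ∑ k, a i k * y k + b i = 0})ᶜ with hU
  have hUmem : ∀ w, w ∈ U ↔ ∀ i, p i w ≠ 0 := by
    intro w
    simp [hU, hp]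
  have hpcont : ∀ i, Continuous (p i) := by
    intro i
    exact (continuous_finset_sum _ fun k _ =>
      continuous_const.mul (continuous_apply k)).add continuous_const
  have hUo : IsOpen U := by
    rw [hU, isOpen_compl_iff]
    exact isClosed_iUnion_of_finite fun i => isClosed_eq (hpcont i) continuous_const
  set C : Set (Fin d → ℝ) := connectedComponentIn U x with hC
  have hxC : x ∈ C := mem_connectedComponentIn hx
  have hCo : IsOpen C := hUo.connectedComponentIn
  have hCU : C ⊆ U := connectedComponentIn_subset U x
  set M : (Fin d → ℝ) → ℝ := fun y => ∏ i, |p i y| ^ (s i) with hM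
  have hMcont : Continuous M :=
    continuous_finset_prod _ fun i _ => (Real.continuous_rpow_const (hs i).le).comp (hpcont i).abs
  have hMposU : ∀ w ∈ U, 0 < M w := by
    intro w hw
    exact Finset.prod_pos fun i _ =>
      Real.rpow_pos_of_pos (abs_pos.mpr ((hUmem w).mp hw i)) _
  have hK : IsCompact (closure C) :=
    Metric.isCompact_of_isClosed_isBounded isClosed_closure hbdd.closure
  obtain ⟨y, hyK, hymax⟩ := hK.exists_isMaxOn ⟨x, subset_closure hxC⟩ hMcont.continuousOn
  have hMy : 0 < M y := lt_of_lt_of_le (hMposU x hx) (hymax (subset_closure hxC))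
  have hyU : y ∈ U := by
    rw [hUmem]
    intro i hi
    have : M y = 0 := by
      apply Finset.prod_eq_zero (Finset.mem_univ i)
      rw [hi]
      simp [Real.zero_rpow (hs i).ne']
    rw [this] at hMy
    exact lt_irrefl 0 hMy
  have hyC : y ∈ C := aux_closure_mem hUo hx hyK hyU
  -- log of M
  set L : (Fin d → ℝ) → ℝ := fun w => ∑ i, s i * Real.log (p i w) with hL
  have hlog : ∀ w ∈ U, L w = Real.log (M w) := by
    intro w hw
    have hne : ∀ i, p i w ≠ 0 := (hUmem w).mp hw
    rw [hM, Real.log_prod (fun i _ => (Real.rpow_pos_of_pos (abs_pos.mpr (hne i)) _).ne')]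
    apply Finset.sum_congr rfl
    intro i _
    rw [Real.log_rpow (abs_pos.mpr (hne i)), Real.log_abs]
  have hLmax : IsLocalMax L y := by
    have hmem : C ∈ nhds y := hCo.mem_nhds hyC
    filter_upwards [hmem] with w hw
    rw [hlog w (hCU hw), hlog y hyU]
    exact Real.log_le_log (hMposU w (hCU hw)) (hymax (subset_closure hw))
  refine ⟨y, hyC, ?_⟩
  intro k
  -- restrict to the line through y in direction e_k
  set g : ℝ → (Fin d → ℝ) := fun t => y + t • (Pi.single k 1 : Fin d → ℝ) with hg
  have hline : ∀ i t, p i (g t) = p i y + t * a i k := by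
    intro i t
    simp only [hp, hg, Pi.add_apply, Pi.smul_apply, smul_eq_mul, mul_add,
      Finset.sum_add_distrib, Pi.single_apply, mul_ite, mul_one, mul_zero]
    rw [Finset.sum_ite_eq' Finset.univ k (fun k' => a i k' * t)]
    simp [mul_comm]
    ring
  set φ : ℝ → ℝ := fun t => ∑ i, s i * Real.log (p i y + t * a i k) with hφ
  have hgL : ∀ t, φ t = L (g t) := by
    intro t
    simp only [hφ, hL]
    exact Finset.sum_congr rfl fun i _ => by rw [hline i t]
  have hgcont : Continuous g := continuous_const.add (continuous_id.smul continuous_const)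
  have hg0 : g 0 = y := by simp [hg]
  have hφmax : IsLocalMax φ 0 := by
    have htend : Filter.Tendsto g (nhds 0) (nhds y) := by
      rw [← hg0]
      exact hgcont.continuousAt
    have := htend.eventually hLmax
    filter_upwards [this] with t ht
    rw [hgL t, hgL 0, hg0]
    exact ht
  have hpy : ∀ i, p i y ≠ 0 := (hUmem y).mp hyU
  have hD : HasDerivAt φ (∑ i, s i * ((p i y)⁻¹ * a i k)) 0 := by
    apply HasDerivAt.fun_sum
    intro i _
    have hinner : HasDerivAt (fun t : ℝ => p i y + t * a i k) (a i k) 0 :=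
      (hasDerivAt_mul_const (a i k)).const_add (p i y)
    have hne0 : p i y + 0 * a i k ≠ 0 := by simpa using hpy i
    have houter := Real.hasDerivAt_log hne0
    have := HasDerivAt.comp 0 houter hinner
    have h2 := this.const_mul (s i)
    simp only [zero_mul, add_zero] at h2
    exact h2
  have hzero := hφmax.hasDerivAt_eq_zero hD
  rw [← hzero]
  apply Finset.sum_congr rfl
  intro i _
  rw [div_eq_mul_inv]
  ring


open scoped BigOperators

/-- Varchenko's theorem for the likelihood equations of a linear model: all complex
critical points of `L = ∑ s_i log p_i` are real, and each bounded region of the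
real hyperplane arrangement contains exactly one critical point. -/
theorem stmt1 (d n : ℕ) (a : Fin (n + 1) → Fin d → ℝ) (b : Fin (n + 1) → ℝ)
    (hplane : ∀ i, a i ≠ 0)
    (hdist : ∀ i j : Fin (n + 1), i ≠ j →
      {x : Fin d → ℝ | ∑ k, a i k * x k + b i = 0} ≠
        {x : Fin d → ℝ | ∑ k, a j k * x k + b j = 0})
    (hess : Submodule.span ℝ (Set.range a) = ⊤)
    (s : Fin (n + 1) → ℝ) (hs : ∀ i, 0 < s i) :
    (∀ z : Fin d → ℂ,
      (∀ i, (∑ k, (a i k : ℂ) * z k + (b i : ℂ)) ≠ 0) →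
      (∀ k, ∑ i, (s i : ℂ) * (a i k : ℂ) / (∑ k', (a i k' : ℂ) * z k' + (b i : ℂ)) = 0) →
      ∀ k, (z k).im = 0) ∧
    (∀ x : Fin d → ℝ,
      x ∈ (⋃ i, {y : Fin d → ℝ | ∑ k, a i k * y k + b i = 0})ᶜ →
      Bornology.IsBounded
        (connectedComponentIn (⋃ i, {y : Fin d → ℝ | ∑ k, a i k * y k + b i = 0})ᶜ x) →
      ∃! y : Fin d → ℝ,
        y ∈ connectedComponentIn (⋃ i, {w : Fin d → ℝ | ∑ k, a i k * w k + b i = 0})ᶜ x ∧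
        ∀ k, ∑ i, s i * a i k / (∑ k', a i k' * y k' + b i) = 0) := by
  constructor
  · exact part1 a b hess s hs
  · intro x hx hbdd
    obtain ⟨y, hyC, hyeq⟩ := aux_exists a b s hs x hx hbdd
    refine ⟨y, ⟨hyC, hyeq⟩, ?_⟩
    rintro y' ⟨hy'C, hy'eq⟩
    have hUne : ∀ i : Fin (n + 1), ∀ u ∈ (⋃ i, {y : Fin d → ℝ | ∑ k, a i k * y k + b i = 0})ᶜ,
        (fun w => ∑ k, a i k * w k + b i) u ≠ 0 := by
      intro i u hu
      simp only [Set.mem_compl_iff, Set.mem_iUnion, Set.mem_setOf_eq, not_exists] at hu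
      exact hu i
    have hcont : ∀ i : Fin (n + 1), Continuous (fun w : Fin d → ℝ => ∑ k, a i k * w k + b i) :=
      fun i => (continuous_finset_sum _ fun k _ =>
        continuous_const.mul (continuous_apply k)).add continuous_const
    apply aux_uniq hess hs y' y ?_ hy'eq hyeq
    intro i
    have h1 := aux_sign (hUne i) (hcont i) hx hy'C
    have h2 := aux_sign (hUne i) (hcont i) hx hyC
    nlinarith [mul_pos h1 h2, sq_nonneg (∑ k, a i k * x k + b i)]
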